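/- arXiv:1002.4731 — 3 statements merged into one kernel-verified Lean document; each statement's English description precedes it below -/
import Mathlib

section
/- The function f(z) = 1/sqrt(1 + (-i*τ₀*z)^(γ-1)), with τ₀ > 0 and γ ∈ (1,2], maps the open first quadrant {z : Re(z) > 0, Im(z) > 0} into itself, where powers and square roots are principal branches on the slit plane ℂ \ (-∞, 0]. -/
open Complex

/-- Real/imag parts of `w ^ (r:ℂ)` for `w ≠ 0`, real `r`. -/
lemma cpow_real_re_im (w : ℂ) (hw : w ≠ 0) (r : ℝ) :
    (w ^ (r : ℂ)).re = Real.exp (r * Real.log (‖w‖)) * Real.cos (r * w.arg) ∧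
    (w ^ (r : ℂ)).im = Real.exp (r * Real.log (‖w‖)) * Real.sin (r * w.arg) := by
  rw [Complex.cpow_def_of_ne_zero hw]
  have hre : (Complex.log w * (r : ℂ)).re = r * Real.log (‖w‖) := by
    simp [Complex.log_re, mul_comm]
  have him : (Complex.log w * (r : ℂ)).im = r * w.arg := by
    simp [Complex.log_im, mul_comm]
  constructor
  · rw [Complex.exp_re, hre, him]
  · rw [Complex.exp_im, hre, him]

/-- The function `f(z) = 1/√(1 + (-i τ₀ z)^(γ-1))` (principal branches) maps the
open first quadrant into itself. -/
theorem stmt_0 (τ₀ γ : ℝ) (hτ : 0 < τ₀) (hγ : 1 < γ ∧ γ ≤ 2)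
    (f : ℂ → ℂ)
    (hf : ∀ z : ℂ, f z = 1 / (1 + (-Complex.I * (τ₀ : ℂ) * z) ^ ((γ : ℂ) - 1)) ^ ((1 : ℂ) / 2))
    (z : ℂ) (hre : 0 < z.re) (him : 0 < z.im) :
    0 < (f z).re ∧ 0 < (f z).im := by
  obtain ⟨hγ1, hγ2⟩ := hγ
  set u : ℂ := -Complex.I * (τ₀ : ℂ) * z with hu
  have hure : 0 < u.re := by simp [hu]; positivity
  have huim : u.im < 0 := by
    simp [hu]
    positivity
  have hune : u ≠ 0 := fun h => by simp [h] at hure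
  -- arg u ∈ (-π/2, 0)
  have harg1 : -(Real.pi / 2) < u.arg := by
    have := Complex.abs_arg_lt_pi_div_two_iff.mpr (Or.inl hure)
    have := abs_lt.mp this
    linarith [this.1]
  have harg2 : u.arg < 0 := Complex.arg_neg_iff.mpr huim
  -- p = u ^ (γ-1)
  have hcast : ((γ : ℂ) - 1) = ((γ - 1 : ℝ) : ℂ) := by push_cast; ring
  set r : ℝ := γ - 1 with hr
  clear_value r
  have hr0 : 0 < r := by linarith
  have hr1 : r ≤ 1 := by linarith
  set p : ℂ := u ^ ((γ : ℂ) - 1) with hp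
  have hpformula := cpow_real_re_im u hune r
  have hθ1 : -(Real.pi / 2) < r * u.arg := by nlinarith
  have hθ2 : r * u.arg < 0 := mul_neg_of_pos_of_neg hr0 harg2
  have hpre : 0 < p.re := by
    rw [hp, hcast, hpformula.1]
    exact mul_pos (Real.exp_pos _) (Real.cos_pos_of_mem_Ioo ⟨hθ1, by linarith [Real.pi_pos]⟩)
  have hpim : p.im < 0 := by
    rw [hp, hcast, hpformula.2]
    exact mul_neg_of_pos_of_neg (Real.exp_pos _)
      (Real.sin_neg_of_neg_of_neg_pi_lt hθ2 (by linarith [Real.pi_pos]))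
  -- v = 1 + p
  set v : ℂ := 1 + p with hv
  have hvre : 0 < v.re := by simp [hv]; linarith
  have hvim : v.im < 0 := by simpa [hv] using hpim
  have hvne : v ≠ 0 := fun h => by simp [h] at hvre
  have hva1 : -(Real.pi / 2) < v.arg := by
    have := abs_lt.mp (Complex.abs_arg_lt_pi_div_two_iff.mpr (Or.inl hvre))
    linarith [this.1]
  have hva2 : v.arg < 0 := Complex.arg_neg_iff.mpr hvim
  -- s = v ^ (1/2)
  set s : ℂ := v ^ ((1 : ℂ) / 2) with hs
  have hhalf : ((1 : ℂ) / 2) = (((1:ℝ)/2 : ℝ) : ℂ) := by push_cast; ring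
  have hsformula := cpow_real_re_im v hvne (1/2)
  have hφ1 : -(Real.pi / 2) < (1/2 : ℝ) * v.arg := by nlinarith
  have hφ2 : (1/2 : ℝ) * v.arg < 0 := by nlinarith
  have hsre : 0 < s.re := by
    rw [hs, hhalf, hsformula.1]
    exact mul_pos (Real.exp_pos _) (Real.cos_pos_of_mem_Ioo ⟨hφ1, by linarith [Real.pi_pos]⟩)
  have hsim : s.im < 0 := by
    rw [hs, hhalf, hsformula.2]
    exact mul_neg_of_pos_of_neg (Real.exp_pos _)
      (Real.sin_neg_of_neg_of_neg_pi_lt hφ2 (by linarith [Real.pi_pos]))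
  have hsne : s ≠ 0 := fun h => by simp [h] at hsre
  have hnsq : 0 < Complex.normSq s := Complex.normSq_pos.mpr hsne
  rw [hf z, one_div, ← hu, ← hp, ← hv, ← hs]
  constructor
  · rw [Complex.inv_re]; positivity
  · rw [Complex.inv_im]
    have : 0 < -s.im := by linarith
    positivity
end

section
/- The function f(z) = 1/sqrt(1 + (-i*τ₀*z)^(γ-1)), with τ₀ > 0 and γ ∈ (1,2], maps the second quadrant {z : Re(z) < 0, Im(z) > 0} into the fourth quadrant {w : Re(w) > 0, Im(w) < 0}. -/
open Complex

lemma cpow_quadrant1 (w : ℂ) (hw : w ≠ 0) (r : ℝ)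
    (h1 : 0 < r * w.arg) (h2 : r * w.arg < Real.pi / 2) :
    0 < (w ^ (r : ℂ)).re ∧ 0 < (w ^ (r : ℂ)).im := by
  rw [Complex.cpow_def_of_ne_zero hw]
  have hre : (Complex.log w * (r : ℂ)).re = Real.log ‖w‖ * r := by
    simp [Complex.log_re]
  have him : (Complex.log w * (r : ℂ)).im = w.arg * r := by
    simp [Complex.log_im]
  rw [Complex.exp_re, Complex.exp_im, hre, him]
  have hexp : 0 < Real.exp (Real.log ‖w‖ * r) := Real.exp_pos _
  constructor
  · exact mul_pos hexp (Real.cos_pos_of_mem_Ioo ⟨by nlinarith [Real.pi_pos], by linarith [mul_comm r w.arg ▸ h2]⟩)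
  · exact mul_pos hexp (Real.sin_pos_of_pos_of_lt_pi (by nlinarith) (by nlinarith [Real.pi_pos]))

lemma arg_quadrant1 (w : ℂ) (hre : 0 < w.re) (him : 0 < w.im) :
    0 < w.arg ∧ w.arg < Real.pi / 2 := by
  constructor
  · rcases lt_or_eq_of_le (Complex.arg_nonneg_iff.2 him.le) with h | h
    · exact h
    · exact absurd ((Complex.arg_eq_zero_iff.1 h.symm).2) him.ne'
  · exact Complex.arg_lt_pi_div_two_iff.2 (Or.inl hre)

/-- `f(z) = 1/√(1 + (-i τ₀ z)^(γ-1))` maps the open second quadrant into the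
open fourth quadrant. -/
theorem stmt_2 (τ₀ γ : ℝ) (hτ : 0 < τ₀) (hγ : 1 < γ ∧ γ ≤ 2)
    (f : ℂ → ℂ)
    (hf : ∀ z : ℂ, f z = 1 / (1 + (-Complex.I * (τ₀ : ℂ) * z) ^ ((γ : ℂ) - 1)) ^ ((1 : ℂ) / 2))
    (z : ℂ) (hre : z.re < 0) (him : 0 < z.im) :
    0 < (f z).re ∧ (f z).im < 0 := by
  obtain ⟨hγ1, hγ2⟩ := hγ
  set w : ℂ := -Complex.I * (τ₀ : ℂ) * z with hw
  have hwre : 0 < w.re := by simp [hw]; positivity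
  have hwim : 0 < w.im := by
    have h : w.im = -τ₀ * z.re := by
      simp [hw, Complex.mul_im, Complex.mul_re]
    rw [h]; nlinarith
  have hwne : w ≠ 0 := fun h => by simp [h] at hwre
  obtain ⟨ha1, ha2⟩ := arg_quadrant1 w hwre hwim
  have hr : (0:ℝ) < γ - 1 := by linarith
  have hcast : ((γ : ℂ) - 1) = ((γ - 1 : ℝ) : ℂ) := by push_cast; ring
  have hq1 : 0 < (w ^ ((γ : ℂ) - 1)).re ∧ 0 < (w ^ ((γ : ℂ) - 1)).im := by
    rw [hcast]
    refine cpow_quadrant1 w hwne (γ - 1) (mul_pos hr ha1) ?_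
    calc (γ - 1) * w.arg ≤ 1 * w.arg := by nlinarith
    _ < Real.pi / 2 := by linarith
  set u : ℂ := 1 + w ^ ((γ : ℂ) - 1) with hu
  have hure : 0 < u.re := by simp [hu]; linarith [hq1.1]
  have huim : 0 < u.im := by simp [hu]; exact hq1.2
  have hune : u ≠ 0 := fun h => by simp [h] at hure
  obtain ⟨hb1, hb2⟩ := arg_quadrant1 u hure huim
  have hhalf : ((1 : ℂ) / 2) = (((1:ℝ)/2 : ℝ) : ℂ) := by push_cast; ring
  have hq2 : 0 < (u ^ ((1 : ℂ) / 2)).re ∧ 0 < (u ^ ((1 : ℂ) / 2)).im := by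
    rw [hhalf]
    exact cpow_quadrant1 u hune (1/2) (by linarith) (by linarith)
  set v : ℂ := u ^ ((1 : ℂ) / 2) with hv
  have hvne : v ≠ 0 := by intro h; rw [h] at hq2; simp at hq2
  have hns : 0 < Complex.normSq v := Complex.normSq_pos.2 hvne
  rw [hf z]
  rw [one_div]
  constructor
  · rw [Complex.inv_re]
    exact div_pos hq2.1 hns
  · rw [Complex.inv_im]
    exact div_neg_of_neg_of_pos (neg_neg_of_pos hq2.2) hns
end

section
/- Let α₀, c₀, τ₀ > 0 and γ ∈ (1,2]. Define α_*(z) = α₀·(-i·z)/(c₀·sqrt(1 + (-i·τ₀·z)^(γ-1))) using principal branches. Then Re(α_*(z)) ≥ 0 for every z in the closed upper half plane with z ≠ 0 where α_* is defined; in particular Re(α_*(ω)) ≥ 0 for all real ω ≠ 0. -/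
open Complex

private lemma cpow_ofReal_re_im (v : ℂ) (hv : v ≠ 0) (r : ℝ) :
    (v ^ (r : ℂ)).re = ‖v‖ ^ r * Real.cos (r * v.arg) ∧
    (v ^ (r : ℂ)).im = ‖v‖ ^ r * Real.sin (r * v.arg) := by
  rw [Complex.cpow_def_of_ne_zero hv]
  have hre : (Complex.log v * (r : ℂ)).re = Real.log (‖v‖) * r := by
    simp [Complex.mul_re, Complex.log_re, Complex.log_im]
  have him : (Complex.log v * (r : ℂ)).im = v.arg * r := by
    simp [Complex.mul_im, Complex.log_re, Complex.log_im]
  have habs : Real.exp (Real.log (‖v‖) * r) = ‖v‖ ^ r := by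
    rw [Real.rpow_def_of_pos (norm_pos_iff.mpr hv)]
  constructor
  · rw [Complex.exp_re, hre, him, habs, mul_comm r]
  · rw [Complex.exp_im, hre, him, habs, mul_comm r]

/-- For the causal attenuation law `α⋆(z) = α₀ (-i z) / (c₀ √(1 + (-i τ₀ z)^(γ-1)))`,
the real part of `α⋆` is nonnegative on the closed upper half plane (away from 0);
in particular on the real axis. -/
theorem stmt_3 (α₀ c₀ τ₀ γ : ℝ) (hα : 0 < α₀) (hc : 0 < c₀) (hτ : 0 < τ₀)
    (hγ : 1 < γ ∧ γ ≤ 2)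
    (αstar : ℂ → ℂ)
    (hαstar : ∀ z : ℂ, αstar z =
      (α₀ : ℂ) * (-Complex.I * z) /
        ((c₀ : ℂ) * (1 + (-Complex.I * (τ₀ : ℂ) * z) ^ ((γ : ℂ) - 1)) ^ ((1 : ℂ) / 2))) :
    (∀ z : ℂ, 0 ≤ z.im → z ≠ 0 → 0 ≤ (αstar z).re) ∧
      (∀ ω : ℝ, ω ≠ 0 → 0 ≤ (αstar (ω : ℂ)).re) := by
  obtain ⟨hγ1, hγ2⟩ := hγ
  have hπ := Real.pi_pos
  have main : ∀ z : ℂ, 0 ≤ z.im → z ≠ 0 → 0 ≤ (αstar z).re := by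
    intro z hz hz0
    set w : ℂ := -Complex.I * z with hw
    have hwre : 0 ≤ w.re := by
      simpa [hw, Complex.mul_re] using hz
    have hwne : w ≠ 0 := mul_ne_zero (neg_ne_zero.mpr Complex.I_ne_zero) hz0
    set t : ℂ := (τ₀ : ℂ) * w with ht
    have htne : t ≠ 0 := mul_ne_zero (by exact_mod_cast hτ.ne') hwne
    have htre : 0 ≤ t.re := by
      have h1 : t.re = τ₀ * w.re := by simp [ht, Complex.mul_re]
      rw [h1]; positivity
    have hargt : |t.arg| ≤ Real.pi / 2 := Complex.abs_arg_le_pi_div_two_iff.mpr htre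
    have hargt' := abs_le.mp hargt
    have hargtw : t.arg = w.arg := Complex.arg_real_mul w hτ
    set β : ℝ := γ - 1 with hβ
    have hβ0 : 0 < β := by simp only [hβ]; linarith
    have hβ1 : β ≤ 1 := by simp only [hβ]; linarith
    obtain ⟨hure, huim⟩ := cpow_ofReal_re_im t htne β
    set u : ℂ := t ^ ((β : ℝ) : ℂ) with hu
    have hβarg : |β * t.arg| ≤ Real.pi / 2 := by
      rw [abs_mul, abs_of_pos hβ0]
      calc β * |t.arg| ≤ 1 * (Real.pi / 2) :=
            mul_le_mul hβ1 hargt (abs_nonneg _) zero_le_one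
        _ = Real.pi / 2 := one_mul _
    have hβarg' := abs_le.mp hβarg
    have hure' : 0 ≤ u.re := by
      rw [hure]
      exact mul_nonneg (Real.rpow_nonneg (norm_nonneg t) β)
        (Real.cos_nonneg_of_mem_Icc ⟨hβarg'.1, hβarg'.2⟩)
    set v : ℂ := 1 + u with hv
    have hvre : 0 < v.re := by
      have h1 : v.re = 1 + u.re := by simp [hv]
      rw [h1]; linarith
    have hvim : v.im = u.im := by simp [hv]
    have hvne : v ≠ 0 := fun h => by rw [h] at hvre; simp at hvre
    obtain ⟨hsre, hsim⟩ := cpow_ofReal_re_im v hvne (1/2)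
    set s : ℂ := v ^ ((((1:ℝ)/2) : ℝ) : ℂ) with hs
    clear_value w t β u v s
    have hargv' := abs_le.mp (Complex.abs_arg_le_pi v)
    have hsre' : 0 ≤ s.re := by
      rw [hsre]
      refine mul_nonneg (Real.rpow_nonneg (norm_nonneg v) _)
        (Real.cos_nonneg_of_mem_Icc ⟨by linarith [hargv'.1], by linarith [hargv'.2]⟩)
    -- sign of the imaginary parts
    have hws : 0 ≤ w.im * s.im := by
      rcases le_or_gt 0 w.im with hwim | hwim
      · -- upper sign: everything has nonnegative imaginary part
        have hargw : 0 ≤ w.arg := Complex.arg_nonneg_iff.mpr hwim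
        have huim' : 0 ≤ u.im := by
          rw [huim]
          refine mul_nonneg (Real.rpow_nonneg (norm_nonneg t) β) ?_
          refine Real.sin_nonneg_of_nonneg_of_le_pi ?_ (by linarith [hβarg'.2])
          rw [hargtw]; positivity
        have hvarg : 0 ≤ v.arg := Complex.arg_nonneg_iff.mpr (by rw [hvim]; exact huim')
        have hsim' : 0 ≤ s.im := by
          rw [hsim]
          refine mul_nonneg (Real.rpow_nonneg (norm_nonneg v) _)
            (Real.sin_nonneg_of_nonneg_of_le_pi (by positivity) (by linarith [hargv'.2]))
        exact mul_nonneg hwim hsim'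
      · -- lower sign
        have hargw : w.arg < 0 := Complex.arg_neg_iff.mpr hwim
        have huim' : u.im ≤ 0 := by
          rw [huim]
          refine mul_nonpos_of_nonneg_of_nonpos (Real.rpow_nonneg (norm_nonneg t) β) ?_
          refine Real.sin_nonpos_of_nonpos_of_neg_pi_le ?_ (by linarith [hβarg'.1])
          rw [hargtw]
          exact mul_nonpos_of_nonneg_of_nonpos hβ0.le hargw.le
        have hvim' : v.im ≤ 0 := by rw [hvim]; exact huim'
        have hvarg : v.arg ≤ 0 := by
          rcases lt_or_eq_of_le hvim' with h | h
          · exact (Complex.arg_neg_iff.mpr h).le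
          · exact le_of_eq (Complex.arg_eq_zero_iff.mpr ⟨hvre.le, h⟩)
        have hsim' : s.im ≤ 0 := by
          rw [hsim]
          refine mul_nonpos_of_nonneg_of_nonpos (Real.rpow_nonneg (norm_nonneg v) _)
            (Real.sin_nonpos_of_nonpos_of_neg_pi_le (by linarith) (by linarith [hargv'.1]))
        nlinarith [hsim', hwim.le]
    -- assemble
    have hrw : αstar z = (α₀ : ℂ) * w / ((c₀ : ℂ) * s) := by
      rw [hαstar z, hs, hv, hu, hβ, ht, hw]
      push_cast
      ring_nf
    rw [hrw, Complex.div_re]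
    have e1 : ((α₀:ℂ) * w).re = α₀ * w.re := by simp
    have e2 : ((α₀:ℂ) * w).im = α₀ * w.im := by simp
    have e3 : ((c₀:ℂ) * s).re = c₀ * s.re := by simp
    have e4 : ((c₀:ℂ) * s).im = c₀ * s.im := by simp
    rw [e1, e2, e3, e4]
    have hn := Complex.normSq_nonneg ((c₀:ℂ) * s)
    have h1 : 0 ≤ α₀ * w.re * (c₀ * s.re) := by positivity
    have h2 : 0 ≤ α₀ * w.im * (c₀ * s.im) := by
      calc (0:ℝ) ≤ α₀ * c₀ * (w.im * s.im) := mul_nonneg (mul_nonneg hα.le hc.le) hws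
        _ = α₀ * w.im * (c₀ * s.im) := by ring
    exact add_nonneg (div_nonneg h1 hn) (div_nonneg h2 hn)
  exact ⟨main, fun ω hω => main (ω : ℂ) (by simp) (by exact_mod_cast hω)⟩
end
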